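/- Under the steady-state relations for Q and M, the limiting price p∞ = (ρM(δ+1) + 2ρ(δ+1)Q(A∞ + 1))/(2 + 2ρQ·α(δ+1)²/b), where A∞ is the limiting expected age, equals b/(α(δ+1)). -/

import Mathlib

theorem stmt_10 (ρ α b δ Q M Ainf : ℝ) (hρ : ρ ∈ Set.Ioo (0:ℝ) 1)
    (hα : α ∈ Set.Ioc (0:ℝ) 1) (hb : 0 < b) (hδ : 0 ≤ δ) (hQ : 0 < Q)
    (hQfix : Q = 1 + ρ * Q / (1 + ρ * Q * (α*(δ+1)^2/b)))
    (hM : M = 2*ρ*Q / (1 - ρ + ρ*Q*(α*(δ+1)^2/b)))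
    (hA : Ainf = Ainf / (1 + ρ*Q*(α*(δ+1)^2/b))
      + (2 - ρ*M*(α*(δ+1)^2/b)) / (2 + 2*ρ*Q*(α*(δ+1)^2/b))) :
    (ρ*M*(δ+1) + 2*ρ*(δ+1)*Q*(Ainf + 1)) / (2 + 2*ρ*Q*(α*(δ+1)^2/b))
      = b / (α*(δ+1)) := by
  obtain ⟨hρ0, hρ1⟩ := hρ
  obtain ⟨hα0, hα1⟩ := hα
  have hδ1 : (0:ℝ) < δ + 1 := by linarith
  have hb' : b ≠ 0 := ne_of_gt hb
  have hα' : α ≠ 0 := ne_of_gt hα0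
  have hx : 0 < ρ*Q*(α*(δ+1)^2/b) := by positivity
  have h1 : (1 + ρ*Q*(α*(δ+1)^2/b)) ≠ 0 := by positivity
  have h2 : (2 + 2*(ρ*Q*(α*(δ+1)^2/b))) ≠ 0 := by positivity
  have hbX : 0 < b + ρ*Q*(α*(δ+1)^2) := by positivity
  have hA' : Ainf * (2*(ρ*Q*(α*(δ+1)^2))) = 2*b - ρ*M*(α*(δ+1)^2) := by
    have h := hA
    field_simp at h
    have h2' : (b + ρ*Q*(α*(δ+1)^2)) * (Ainf * (2*(ρ*Q*(α*(δ+1)^2))))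
        = (b + ρ*Q*(α*(δ+1)^2)) * (2*b - ρ*M*(α*(δ+1)^2)) := by
      linear_combination (b + ρ*Q*(α*(δ+1)^2)) * h
    exact mul_left_cancel₀ (ne_of_gt hbX) h2'
  have hd1 : (δ+1) ≠ 0 := ne_of_gt hδ1
  field_simp
  linear_combination hA'
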